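/- Define Ind_ℓ(m) = argmin_{1≤j≤m} ( Opt_{ℓ-1}(j) + Σ_{i=j+1}^m max{0, t(v_i) − j} ) (taking, say, the smallest minimizer). Then for every 1 ≤ ℓ ≤ λ, Ind_ℓ is monotone: k < m implies Ind_ℓ(k) ≤ Ind_ℓ(m). -/

import Mathlib

open Finset

/-- Influence process on a complete graph with node set `{0,…,m-1}`, thresholds `t`,
incentives `p`: at round 0 exactly the nodes with `p v = t v` are influenced; afterwards
a node is influenced once the number of already influenced other nodes reaches `t v - p v`. -/
def kInfl (m : ℕ) (t p : ℕ → ℕ) : ℕ → Finset ℕ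
  | 0 => (range m).filter fun v => p v = t v
  | ℓ + 1 => kInfl m t p ℓ ∪ (range m).filter fun v =>
      t v - p v ≤ ((kInfl m t p ℓ).erase v).card

/-- `kOpt t ℓ m`: minimum total incentive influencing all of the complete graph on
`{0,…,m-1}` within `ℓ` rounds. -/
noncomputable def kOpt (t : ℕ → ℕ) (ℓ m : ℕ) : ℕ :=
  sInf {c : ℕ | ∃ p : ℕ → ℕ, (∀ v < m, p v ≤ t v) ∧
    kInfl m t p ℓ = range m ∧ c = ∑ v ∈ range m, p v}

/-- The objective function of the recurrence for `Opt_ℓ(m)`. -/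
noncomputable def kf (t : ℕ → ℕ) (ℓ m j : ℕ) : ℕ :=
  kOpt t (ℓ - 1) j + ∑ i ∈ Ico j m, (t i - j)

/-- `Ind_ℓ(m)`: the smallest minimizer `j ∈ [1,m]` of the recurrence objective. -/
noncomputable def kInd (t : ℕ → ℕ) (ℓ m : ℕ) : ℕ :=
  sInf {j | 1 ≤ j ∧ j ≤ m ∧ ∀ j', 1 ≤ j' → j' ≤ m → kf t ℓ m j ≤ kf t ℓ m j'}

lemma kf_split (t : ℕ → ℕ) (ℓ k m j : ℕ) (hjk : j ≤ k) (hkm : k ≤ m) :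
    kf t ℓ m j = kf t ℓ k j + ∑ i ∈ Ico k m, (t i - j) := by
  unfold kf
  rw [← Finset.sum_Ico_consecutive _ hjk hkm, add_assoc]

lemma kInd_mem (t : ℕ → ℕ) (ℓ k : ℕ) (hk : 1 ≤ k) :
    kInd t ℓ k ∈ {j | 1 ≤ j ∧ j ≤ k ∧ ∀ j', 1 ≤ j' → j' ≤ k →
      kf t ℓ k j ≤ kf t ℓ k j'} := by
  apply Nat.sInf_mem
  obtain ⟨j, hj, hmin⟩ := Finset.exists_min_image (Finset.Icc 1 k) (kf t ℓ k)
    ⟨1, Finset.mem_Icc.mpr ⟨le_refl 1, hk⟩⟩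
  rw [Finset.mem_Icc] at hj
  exact ⟨j, hj.1, hj.2, fun j' h1 h2 => hmin j' (Finset.mem_Icc.mpr ⟨h1, h2⟩)⟩

/-- the minimizing index is monotone: `k < m → Ind_ℓ(k) ≤ Ind_ℓ(m)`. -/
theorem clique_index_monotone (n lam ℓ k m : ℕ) (t : ℕ → ℕ)
    (hl1 : 1 ≤ ℓ) (hl2 : ℓ ≤ lam) (hk1 : 1 ≤ k) (hkm : k < m) (hmn : m ≤ n)
    (hmono : ∀ i j, i ≤ j → j < n → t i ≤ t j)
    (hbd : ∀ v < n, 1 ≤ t v ∧ t v ≤ n - 1) :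
    kInd t ℓ k ≤ kInd t ℓ m := by
  by_contra h
  push_neg at h
  obtain ⟨ha1, hak, hamin⟩ := kInd_mem t ℓ k hk1
  obtain ⟨hb1, hbm, hbmin⟩ := kInd_mem t ℓ m (hk1.trans hkm.le)
  have hbk : kInd t ℓ m ≤ k := (h.trans_le hak).le
  have hb_not : kInd t ℓ m ∉ {j | 1 ≤ j ∧ j ≤ k ∧ ∀ j', 1 ≤ j' → j' ≤ k →
      kf t ℓ k j ≤ kf t ℓ k j'} := Nat.notMem_of_lt_sInf h
  simp only [Set.mem_setOf_eq, not_and] at hb_not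
  have := hb_not hb1 hbk
  push_neg at this
  obtain ⟨j', hj1, hj2, hj3⟩ := this
  have hak' : kf t ℓ k (kInd t ℓ k) < kf t ℓ k (kInd t ℓ m) :=
    (hamin j' hj1 hj2).trans_lt hj3
  have key : kf t ℓ m (kInd t ℓ k) < kf t ℓ m (kInd t ℓ m) := by
    rw [kf_split t ℓ k m _ hak hkm.le, kf_split t ℓ k m _ hbk hkm.le]
    exact add_lt_add_of_lt_of_le hak'
      (Finset.sum_le_sum fun i _ => by omega)
  exact absurd (hbmin _ ha1 (hak.trans hkm.le)) (not_le.mpr key)
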